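/- arXiv:2204.13977 — 2 statements merged into one kernel-verified Lean document; each statement's English description precedes it below -/
import Mathlib

section
/- For m,n ≥ 3, the number of quartic occurrences in the Fibonacci array f_{m,n}, i.e. the number of tuples (i,j,r,l) with r,l ≥ 1, i+2r ≤ F(m), j+2l ≤ F(n) such that the four r × l subarrays of f_{m,n} with top-left corners (i,j), (i,j+l), (i+r,j), (i+r,j+l) are all equal, is exactly R(m)·R(n); consequently the number of Type II(a) tandem occurrences (tuples (i,j,r,l) as above with f_{m,n}[(i,j);(r,l)] = f_{m,n}[(i+r,j+l);(r,l)]) also equals R(m)·R(n). -/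
/-- Fibonacci numbers: F(0)=1, F(1)=1, F(n+2)=F(n+1)+F(n). -/
def F : ℕ → ℕ
  | 0 => 1
  | 1 => 1
  | n + 2 => F (n + 1) + F n

/-- Finite Fibonacci words over {a,b} coded as Fin 2 (a=0, b=1). -/
def fibWord : ℕ → List (Fin 2)
  | 0 => [0]
  | 1 => [1]
  | n + 2 => fibWord (n + 1) ++ fibWord n

/-- The Fibonacci arrays f_{m,n} over {a,b,c,d} coded as Fin 2 × Fin 2,
with a=(0,0), b=(0,1), c=(1,0), d=(1,1); `fibArr m n i j` is the (i,j) entry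
(0-indexed, only indices i < F m, j < F n are meaningful). -/
def fibArr : ℕ → ℕ → ℕ → ℕ → Fin 2 × Fin 2
  | 0, 0, _, _ => (0, 0)
  | 0, 1, _, _ => (0, 1)
  | 1, 0, _, _ => (1, 0)
  | 1, 1, _, _ => (1, 1)
  | 0, n + 2, i, j =>
      if j < F (n + 1) then fibArr 0 (n + 1) i j else fibArr 0 n i (j - F (n + 1))
  | 1, n + 2, i, j =>
      if j < F (n + 1) then fibArr 1 (n + 1) i j else fibArr 1 n i (j - F (n + 1))
  | m + 2, k, i, j =>
      if i < F (m + 1) then fibArr (m + 1) k i j else fibArr m k (i - F (m + 1)) j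
  termination_by m n => (m, n)

/-- The r × l subarray of u with top-left entry at (i,j). -/
def subarr (u : ℕ → ℕ → Fin 2 × Fin 2) (i j r l : ℕ) : Fin r × Fin l → Fin 2 × Fin 2 :=
  fun p => u (i + p.1.val) (j + p.2.val)

/-- Number of square occurrences in a finite word. -/
noncomputable def sqOcc (w : List (Fin 2)) : ℕ :=
  {p : ℕ × ℕ | 1 ≤ p.2 ∧ p.1 + 2 * p.2 ≤ w.length ∧
    ∀ t < p.2, w.getD (p.1 + t) 0 = w.getD (p.1 + p.2 + t) 0}.ncard

/-- R(n): number of square occurrences in f_n. -/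
noncomputable def R (n : ℕ) : ℕ := sqOcc (fibWord n)

-- auxiliary

def wd (k i : ℕ) : Fin 2 := (fibWord k).getD i 0

def SqC (k i r : ℕ) : Prop := ∀ t < r, wd k (i + t) = wd k (i + r + t)

def Sq (k : ℕ) : Set (ℕ × ℕ) := {p | 1 ≤ p.2 ∧ p.1 + 2 * p.2 ≤ F k ∧ SqC k p.1 p.2}

lemma fibWord_length : ∀ k, (fibWord k).length = F k
  | 0 => rfl
  | 1 => rfl
  | n+2 => by simp [fibWord, F, fibWord_length (n+1), fibWord_length n]

lemma R_eq (k : ℕ) : R k = (Sq k).ncard := by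
  unfold R sqOcc
  congr 1
  ext p
  simp [Sq, SqC, wd, fibWord_length]

lemma getD_fib_lt (k j : ℕ) (h : j < F (k+1)) :
    (fibWord (k+2)).getD j 0 = (fibWord (k+1)).getD j 0 := by
  rw [show fibWord (k+2) = fibWord (k+1) ++ fibWord k from rfl,
    List.getD_append _ _ _ _ (by rw [fibWord_length]; exact h)]

lemma getD_fib_ge (k j : ℕ) (h : ¬ j < F (k+1)) :
    (fibWord (k+2)).getD j 0 = (fibWord k).getD (j - F (k+1)) 0 := by
  rw [show fibWord (k+2) = fibWord (k+1) ++ fibWord k from rfl,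
    List.getD_append_right _ _ _ _ (by rw [fibWord_length]; omega), fibWord_length]

lemma fibArr_eq : ∀ m n i j, i < F m → j < F n →
    fibArr m n i j = (wd m i, wd n j) := by
  intro m n i j
  unfold wd
  induction m, n, i, j using fibArr.induct with
  | case1 i j => intro h1 h2
                 simp only [show F 0 = 1 from rfl] at h1 h2
                 obtain rfl : i = 0 := by omega
                 obtain rfl : j = 0 := by omega
                 simp [fibArr, fibWord]
  | case2 i j => intro h1 h2
                 simp only [show F 0 = 1 from rfl, show F 1 = 1 from rfl] at h1 h2
                 obtain rfl : i = 0 := by omega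
                 obtain rfl : j = 0 := by omega
                 simp [fibArr, fibWord]
  | case3 i j => intro h1 h2
                 simp only [show F 0 = 1 from rfl, show F 1 = 1 from rfl] at h1 h2
                 obtain rfl : i = 0 := by omega
                 obtain rfl : j = 0 := by omega
                 simp [fibArr, fibWord]
  | case4 i j => intro h1 h2
                 simp only [show F 1 = 1 from rfl] at h1 h2
                 obtain rfl : i = 0 := by omega
                 obtain rfl : j = 0 := by omega
                 simp [fibArr, fibWord]
  | case5 n i j hj ih =>
      intro h1 h2
      rw [fibArr, if_pos hj, ih h1 hj, getD_fib_lt _ _ hj]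
  | case6 n i j hj ih =>
      intro h1 h2
      have h2a : j < F (n+1) + F n := h2
      have h2' : j - F (n+1) < F n := by omega
      rw [fibArr, if_neg hj, ih h1 h2', getD_fib_ge _ _ hj]
  | case7 n i j hj ih =>
      intro h1 h2
      rw [fibArr, if_pos hj, ih h1 hj, getD_fib_lt _ _ hj]
  | case8 n i j hj ih =>
      intro h1 h2
      have h2a : j < F (n+1) + F n := h2
      have h2' : j - F (n+1) < F n := by omega
      rw [fibArr, if_neg hj, ih h1 h2', getD_fib_ge _ _ hj]
  | case9 m k i j hi ih =>
      intro h1 h2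
      rw [fibArr, if_pos hi, ih hi h2, getD_fib_lt _ _ hi]
  | case10 m k i j hi ih =>
      intro h1 h2
      have h1a : i < F (m+1) + F m := h1
      have h1' : i - F (m+1) < F m := by omega
      rw [fibArr, if_neg hi, ih h1' h2, getD_fib_ge _ _ hi]

section iffs
variable {m n i j r l : ℕ}

lemma horiz_iff (hr : 1 ≤ r) (hl : 1 ≤ l) (hbm : i + 2 * r ≤ F m) (hbn : j + 2 * l ≤ F n) :
    subarr (fibArr m n) i j r l = subarr (fibArr m n) i (j + l) r l ↔ SqC n j l := by
  constructor
  · intro h t ht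
    have := congrFun h (⟨0, hr⟩, ⟨t, ht⟩)
    simp only [subarr] at this
    rw [fibArr_eq m n _ _ (by omega) (by omega),
        fibArr_eq m n _ _ (by omega) (by omega)] at this
    have := (Prod.ext_iff.mp this).2
    simpa [Nat.add_assoc] using this
  · intro h
    funext p
    obtain ⟨⟨t1, ht1⟩, ⟨t2, ht2⟩⟩ := p
    simp only [subarr]
    rw [fibArr_eq m n _ _ (by omega) (by omega),
        fibArr_eq m n _ _ (by omega) (by omega)]
    have := h t2 ht2
    simp only [Nat.add_assoc] at this ⊢
    rw [this]

lemma vert_iff (hr : 1 ≤ r) (hl : 1 ≤ l) (hbm : i + 2 * r ≤ F m) (hbn : j + 2 * l ≤ F n) :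
    subarr (fibArr m n) i j r l = subarr (fibArr m n) (i + r) j r l ↔ SqC m i r := by
  constructor
  · intro h t ht
    have := congrFun h (⟨t, ht⟩, ⟨0, hl⟩)
    simp only [subarr] at this
    rw [fibArr_eq m n _ _ (by omega) (by omega),
        fibArr_eq m n _ _ (by omega) (by omega)] at this
    have := (Prod.ext_iff.mp this).1
    simpa [Nat.add_assoc] using this
  · intro h
    funext p
    obtain ⟨⟨t1, ht1⟩, ⟨t2, ht2⟩⟩ := p
    simp only [subarr]
    rw [fibArr_eq m n _ _ (by omega) (by omega),
        fibArr_eq m n _ _ (by omega) (by omega)]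
    have := h t1 ht1
    simp only [Nat.add_assoc] at this ⊢
    rw [this]

lemma diag_iff (hr : 1 ≤ r) (hl : 1 ≤ l) (hbm : i + 2 * r ≤ F m) (hbn : j + 2 * l ≤ F n) :
    subarr (fibArr m n) i j r l = subarr (fibArr m n) (i + r) (j + l) r l
      ↔ (SqC m i r ∧ SqC n j l) := by
  constructor
  · intro h
    constructor
    · intro t ht
      have := congrFun h (⟨t, ht⟩, ⟨0, hl⟩)
      simp only [subarr] at this
      rw [fibArr_eq m n _ _ (by omega) (by omega),
          fibArr_eq m n _ _ (by omega) (by omega)] at this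
      have := (Prod.ext_iff.mp this).1
      simpa [Nat.add_assoc] using this
    · intro t ht
      have := congrFun h (⟨0, hr⟩, ⟨t, ht⟩)
      simp only [subarr] at this
      rw [fibArr_eq m n _ _ (by omega) (by omega),
          fibArr_eq m n _ _ (by omega) (by omega)] at this
      have := (Prod.ext_iff.mp this).2
      simpa [Nat.add_assoc] using this
  · rintro ⟨h1, h2⟩
    funext p
    obtain ⟨⟨t1, ht1⟩, ⟨t2, ht2⟩⟩ := p
    simp only [subarr]
    rw [fibArr_eq m n _ _ (by omega) (by omega),
        fibArr_eq m n _ _ (by omega) (by omega)]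
    have e1 := h1 t1 ht1
    have e2 := h2 t2 ht2
    simp only [Nat.add_assoc] at e1 e2 ⊢
    rw [e1, e2]

end iffs

lemma prod_count (A B : Set (ℕ × ℕ)) :
    {t : ℕ × ℕ × ℕ × ℕ | (t.1, t.2.2.1) ∈ A ∧ (t.2.1, t.2.2.2) ∈ B}.ncard
      = A.ncard * B.ncard := by
  have hinj : Function.Injective
      (fun p : (ℕ × ℕ) × (ℕ × ℕ) => (p.1.1, p.2.1, p.1.2, p.2.2) : _ → ℕ × ℕ × ℕ × ℕ) := by
    rintro ⟨⟨a, b⟩, ⟨c, d⟩⟩ ⟨⟨a', b'⟩, ⟨c', d'⟩⟩ h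
    simp only [Prod.mk.injEq] at h
    obtain ⟨h1, h2, h3, h4⟩ := h
    simp_all
  have himg : {t : ℕ × ℕ × ℕ × ℕ | (t.1, t.2.2.1) ∈ A ∧ (t.2.1, t.2.2.2) ∈ B}
      = (fun p : (ℕ × ℕ) × (ℕ × ℕ) => (p.1.1, p.2.1, p.1.2, p.2.2)) '' (A ×ˢ B) := by
    ext ⟨i, j, r, l⟩
    simp only [Set.mem_setOf_eq, Set.mem_image, Set.mem_prod]
    constructor
    · rintro ⟨ha, hb⟩
      exact ⟨((i, r), (j, l)), ⟨ha, hb⟩, rfl⟩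
    · rintro ⟨⟨⟨a, b⟩, ⟨c, d⟩⟩, ⟨ha, hb⟩, heq⟩
      simp only [Prod.mk.injEq] at heq
      obtain ⟨rfl, rfl, rfl, rfl⟩ := heq
      exact ⟨ha, hb⟩
  rw [himg, Set.ncard_image_of_injective _ hinj, ← Nat.card_coe_set_eq,
    Nat.card_congr (Equiv.Set.prod A B), Nat.card_prod,
    Nat.card_coe_set_eq, Nat.card_coe_set_eq]

/-- For m,n ≥ 3, the number of quartic occurrences in f_{m,n} is R(m)·R(n),
and consequently the number of Type II(a) tandem occurrences is also R(m)·R(n). -/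
theorem stmt5 (m n : ℕ) (hm : 3 ≤ m) (hn : 3 ≤ n) :
    ({t : ℕ × ℕ × ℕ × ℕ | 1 ≤ t.2.2.1 ∧ 1 ≤ t.2.2.2 ∧
      t.1 + 2 * t.2.2.1 ≤ F m ∧ t.2.1 + 2 * t.2.2.2 ≤ F n ∧
      subarr (fibArr m n) t.1 t.2.1 t.2.2.1 t.2.2.2
        = subarr (fibArr m n) t.1 (t.2.1 + t.2.2.2) t.2.2.1 t.2.2.2 ∧
      subarr (fibArr m n) t.1 t.2.1 t.2.2.1 t.2.2.2
        = subarr (fibArr m n) (t.1 + t.2.2.1) t.2.1 t.2.2.1 t.2.2.2 ∧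
      subarr (fibArr m n) t.1 t.2.1 t.2.2.1 t.2.2.2
        = subarr (fibArr m n) (t.1 + t.2.2.1) (t.2.1 + t.2.2.2) t.2.2.1 t.2.2.2}.ncard
      = R m * R n) ∧
    ({t : ℕ × ℕ × ℕ × ℕ | 1 ≤ t.2.2.1 ∧ 1 ≤ t.2.2.2 ∧
      t.1 + 2 * t.2.2.1 ≤ F m ∧ t.2.1 + 2 * t.2.2.2 ≤ F n ∧
      subarr (fibArr m n) t.1 t.2.1 t.2.2.1 t.2.2.2
        = subarr (fibArr m n) (t.1 + t.2.2.1) (t.2.1 + t.2.2.2) t.2.2.1 t.2.2.2}.ncard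
      = R m * R n) := by
  have key : ∀ t : ℕ × ℕ × ℕ × ℕ,
      (((t.1, t.2.2.1) ∈ Sq m ∧ (t.2.1, t.2.2.2) ∈ Sq n) ↔
        (1 ≤ t.2.2.1 ∧ 1 ≤ t.2.2.2 ∧ t.1 + 2 * t.2.2.1 ≤ F m ∧ t.2.1 + 2 * t.2.2.2 ≤ F n ∧
          SqC m t.1 t.2.2.1 ∧ SqC n t.2.1 t.2.2.2)) := by
    rintro ⟨i, j, r, l⟩
    simp only [Sq, Set.mem_setOf_eq]
    tauto
  constructor
  · have hset : {t : ℕ × ℕ × ℕ × ℕ | 1 ≤ t.2.2.1 ∧ 1 ≤ t.2.2.2 ∧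
        t.1 + 2 * t.2.2.1 ≤ F m ∧ t.2.1 + 2 * t.2.2.2 ≤ F n ∧
        subarr (fibArr m n) t.1 t.2.1 t.2.2.1 t.2.2.2
          = subarr (fibArr m n) t.1 (t.2.1 + t.2.2.2) t.2.2.1 t.2.2.2 ∧
        subarr (fibArr m n) t.1 t.2.1 t.2.2.1 t.2.2.2
          = subarr (fibArr m n) (t.1 + t.2.2.1) t.2.1 t.2.2.1 t.2.2.2 ∧
        subarr (fibArr m n) t.1 t.2.1 t.2.2.1 t.2.2.2
          = subarr (fibArr m n) (t.1 + t.2.2.1) (t.2.1 + t.2.2.2) t.2.2.1 t.2.2.2}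
        = {t : ℕ × ℕ × ℕ × ℕ | (t.1, t.2.2.1) ∈ Sq m ∧ (t.2.1, t.2.2.2) ∈ Sq n} := by
      ext ⟨i, j, r, l⟩
      simp only [Set.mem_setOf_eq]
      rw [key (i, j, r, l)]
      constructor
      · rintro ⟨hr, hl, hbm, hbn, h1, h2, h3⟩
        exact ⟨hr, hl, hbm, hbn, (vert_iff hr hl hbm hbn).mp h2,
          (horiz_iff hr hl hbm hbn).mp h1⟩
      · rintro ⟨hr, hl, hbm, hbn, cm, cn⟩
        exact ⟨hr, hl, hbm, hbn, (horiz_iff hr hl hbm hbn).mpr cn,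
          (vert_iff hr hl hbm hbn).mpr cm, (diag_iff hr hl hbm hbn).mpr ⟨cm, cn⟩⟩
    rw [hset, prod_count, R_eq, R_eq]
  · have hset : {t : ℕ × ℕ × ℕ × ℕ | 1 ≤ t.2.2.1 ∧ 1 ≤ t.2.2.2 ∧
        t.1 + 2 * t.2.2.1 ≤ F m ∧ t.2.1 + 2 * t.2.2.2 ≤ F n ∧
        subarr (fibArr m n) t.1 t.2.1 t.2.2.1 t.2.2.2
          = subarr (fibArr m n) (t.1 + t.2.2.1) (t.2.1 + t.2.2.2) t.2.2.1 t.2.2.2}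
        = {t : ℕ × ℕ × ℕ × ℕ | (t.1, t.2.2.1) ∈ Sq m ∧ (t.2.1, t.2.2.2) ∈ Sq n} := by
      ext ⟨i, j, r, l⟩
      simp only [Set.mem_setOf_eq]
      rw [key (i, j, r, l)]
      constructor
      · rintro ⟨hr, hl, hbm, hbn, h3⟩
        obtain ⟨cm, cn⟩ := (diag_iff hr hl hbm hbn).mp h3
        exact ⟨hr, hl, hbm, hbn, cm, cn⟩
      · rintro ⟨hr, hl, hbm, hbn, cm, cn⟩
        exact ⟨hr, hl, hbm, hbn, (diag_iff hr hl hbm hbn).mpr ⟨cm, cn⟩⟩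
    rw [hset, prod_count, R_eq, R_eq]
end

section
/- For all m,n ≥ 0 and all indices 0 ≤ i < F(m), 0 ≤ j < F(n), the (i,j) entry of the Fibonacci array f_{m,n} equals the pair (f_m[i], f_n[j]), where f_m[i] and f_n[j] denote the i-th letter of the 1D Fibonacci word f_m and the j-th letter of f_n (letters coded a=0, b=1). In particular, every row of f_{m,n} is a copy of the 1D Fibonacci word f_n (over {d,c} or over {b,a} according to the row), and every column of f_{m,n} is a copy of f_m (over {d,b} or over {c,a} according to the column). -/
lemma fibWord_len (n : ℕ) : (fibWord n).length = F n := by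
  induction n using fibWord.induct with
  | case1 => rfl
  | case2 => rfl
  | case3 n h1 h2 => simp [fibWord, F, h1, h2]

lemma getD_split (n i : ℕ) :
    (fibWord (n + 2)).getD i 0 =
      if i < F (n + 1) then (fibWord (n + 1)).getD i 0
      else (fibWord n).getD (i - F (n + 1)) 0 := by
  rw [show fibWord (n + 2) = fibWord (n + 1) ++ fibWord n from rfl]
  by_cases h : i < F (n + 1)
  · rw [if_pos h, List.getD_append _ _ _ _ (by rwa [fibWord_len])]
  · rw [if_neg h, List.getD_eq_getElem?_getD, List.getD_eq_getElem?_getD,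
      List.getElem?_append_right (by rw [fibWord_len]; omega), fibWord_len]

/-- For all m,n ≥ 0 and 0 ≤ i < F(m), 0 ≤ j < F(n), the (i,j) entry of the
Fibonacci array f_{m,n} is the pair (f_m[i], f_n[j]) of letters of the 1D Fibonacci words
(letters coded a=0, b=1). In particular every row of f_{m,n} is a copy of f_n and every
column a copy of f_m, over the appropriate two-letter alphabet. -/
theorem stmt11 (m n i j : ℕ) (hi : i < F m) (hj : j < F n) :
    fibArr m n i j = ((fibWord m).getD i 0, (fibWord n).getD j 0) := by
  induction m, n, i, j using fibArr.induct with
  | case1 i j =>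
    obtain rfl := Nat.lt_one_iff.mp hi
    obtain rfl := Nat.lt_one_iff.mp hj
    simp [fibArr, fibWord]
  | case2 i j =>
    obtain rfl := Nat.lt_one_iff.mp hi
    obtain rfl := Nat.lt_one_iff.mp hj
    simp [fibArr, fibWord]
  | case3 i j =>
    obtain rfl := Nat.lt_one_iff.mp hi
    obtain rfl := Nat.lt_one_iff.mp hj
    simp [fibArr, fibWord]
  | case4 i j =>
    obtain rfl := Nat.lt_one_iff.mp hi
    obtain rfl := Nat.lt_one_iff.mp hj
    simp [fibArr, fibWord]
  | case5 n i j h ih =>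
    rw [show fibArr 0 (n + 2) i j = fibArr 0 (n + 1) i j from by rw [fibArr, if_pos h],
      getD_split, if_pos h, ih hi h]
  | case6 n i j h ih =>
    have hj' : j - F (n + 1) < F n := by
      have h2 : F n.succ.succ = F (n + 1) + F n := rfl
      omega
    rw [show fibArr 0 (n + 2) i j = fibArr 0 n i (j - F (n + 1)) from by
        rw [fibArr, if_neg h],
      getD_split, if_neg h, ih hi hj']
  | case7 n i j h ih =>
    rw [show fibArr 1 (n + 2) i j = fibArr 1 (n + 1) i j from by rw [fibArr, if_pos h],
      getD_split, if_pos h, ih hi h]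
  | case8 n i j h ih =>
    have hj' : j - F (n + 1) < F n := by
      have h2 : F n.succ.succ = F (n + 1) + F n := rfl
      omega
    rw [show fibArr 1 (n + 2) i j = fibArr 1 n i (j - F (n + 1)) from by
        rw [fibArr, if_neg h],
      getD_split, if_neg h, ih hi hj']
  | case9 m k i j h ih =>
    rw [show fibArr (m + 2) k i j = fibArr (m + 1) k i j from by rw [fibArr, if_pos h],
      getD_split, if_pos h, ih h hj]
  | case10 m k i j h ih =>
    have hi' : i - F (m + 1) < F m := by
      have h2 : F m.succ.succ = F (m + 1) + F m := rfl
      omega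
    rw [show fibArr (m + 2) k i j = fibArr m k (i - F (m + 1)) j from by
        rw [fibArr, if_neg h],
      getD_split, if_neg h, ih hi' hj]
end
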